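/- Let W ∈ ℂ[z₁,…,z_N] be a nondegenerate quasi-homogeneous polynomial of type (q₁,…,q_N) with all weights qᵢ ≤ 1/2. Let G₁,…,G_m be monomials in z₁,…,z_N, each of quasi-homogeneous weight strictly less than 1, and for t = (t₁,…,t_m) ∈ ℂ^m set F(z,t) = W(z) + Σ_{j=1}^m t_j G_j(z) (the lower deformation of W). Then for every fixed t ∈ ℂ^m and every constant C > 0, Σᵢ|∂F/∂zᵢ(z,t)|² − C·Σ_{i,j}|∂²F/∂zᵢ∂z_j(z,t)| → ∞ as ‖z‖ → ∞ in ℂ^N. (Strong tameness of the section-bundle system (ℂ^N, F(·,t)).) -/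

import Mathlib

open MvPolynomial Finset

namespace StrongTame

variable {N : ℕ}

def wdeg (k : Fin N → ℕ) (m : Fin N →₀ ℕ) : ℕ := ∑ i, k i * m i

lemma prod_scale {R : Type*} [CommRing R] (k : Fin N → ℕ) (lam : R) (z : Fin N → R) (m : Fin N →₀ ℕ) :
    ∏ i, (lam ^ k i * z i) ^ m i = lam ^ wdeg k m * ∏ i, z i ^ m i := by
  rw [wdeg, ← Finset.prod_pow_eq_pow_sum, ← Finset.prod_mul_distrib]
  exact Finset.prod_congr rfl fun i _ => by rw [mul_pow, pow_mul]

lemma eval_scale_of_deg (k : Fin N → ℕ) {P : MvPolynomial (Fin N) ℂ} {D : ℕ}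
    (h : ∀ m ∈ P.support, wdeg k m = D) (lam : ℂ) (z : Fin N → ℂ) :
    eval (fun i => lam ^ k i * z i) P = lam ^ D * eval z P := by
  rw [eval_eq', eval_eq', Finset.mul_sum]
  refine Finset.sum_congr rfl fun m hm => ?_
  rw [prod_scale, h m hm]; ring

lemma eval_scale_bound (k : Fin N → ℕ) {P : MvPolynomial (Fin N) ℂ} {D : ℕ}
    (h : ∀ m ∈ P.support, wdeg k m ≤ D) {lam : ℝ} (hl : 1 ≤ lam)
    {u : Fin N → ℂ} (hu : ∀ i, ‖u i‖ ≤ 1) :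
    ‖eval (fun i => (lam : ℂ) ^ k i * u i) P‖ ≤ (∑ m ∈ P.support, ‖coeff m P‖) * lam ^ D := by
  rw [eval_eq', Finset.sum_mul]
  refine (norm_sum_le _ _).trans (Finset.sum_le_sum fun m hm => ?_)
  rw [prod_scale, norm_mul, norm_mul]
  have hl0 : (0:ℝ) ≤ lam := by linarith
  have h1 : ‖(lam:ℂ) ^ wdeg k m‖ = lam ^ wdeg k m := by
    rw [norm_pow, Complex.norm_real, Real.norm_of_nonneg hl0]
  have h2 : ‖∏ i, u i ^ m i‖ ≤ 1 := by
    rw [norm_prod]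
    refine Finset.prod_le_one (fun i _ => by positivity) (fun i _ => ?_)
    rw [norm_pow]
    exact pow_le_one₀ (norm_nonneg _) (hu i)
  calc ‖coeff m P‖ * (‖(lam:ℂ) ^ wdeg k m‖ * ‖∏ i, u i ^ m i‖)
      ≤ ‖coeff m P‖ * (lam ^ D * 1) := by
        refine mul_le_mul_of_nonneg_left ?_ (norm_nonneg _)
        rw [h1]
        exact mul_le_mul (pow_le_pow_right₀ hl (h m hm)) h2 (norm_nonneg _) (by positivity)
    _ = ‖coeff m P‖ * lam ^ D := by ring

lemma wdeg_sub_single (k : Fin N → ℕ) (s : Fin N →₀ ℕ) (i : Fin N) (hsi : 1 ≤ s i) :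
    wdeg k (s - Finsupp.single i 1) + k i = wdeg k s := by
  set m : Fin N →₀ ℕ := s - Finsupp.single i 1 with hm
  have happ : ∀ j, m j = s j - (if i = j then 1 else 0) := by
    intro j; rw [hm, Finsupp.tsub_apply, Finsupp.single_apply]
  rw [wdeg, wdeg, ← Finset.sum_erase_add _ _ (Finset.mem_univ i),
    ← Finset.sum_erase_add _ _ (Finset.mem_univ i)]
  have e1 : ∑ j ∈ Finset.univ.erase i, k j * m j
      = ∑ j ∈ Finset.univ.erase i, k j * s j := by
    refine Finset.sum_congr rfl fun j hj => ?_
    rw [happ j, if_neg (Ne.symm (Finset.mem_erase.mp hj).1)]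
    simp
  have e2 : m i = s i - 1 := by rw [happ i, if_pos rfl]
  rw [e1, e2]
  have : k i * (s i - 1) + k i = k i * s i := by
    obtain ⟨c, hc'⟩ := Nat.exists_eq_add_of_le hsi
    rw [hc']
    have : 1 + c - 1 = c := by omega
    rw [this]; ring
  omega

lemma support_pderiv_wdeg (k : Fin N → ℕ) {P : MvPolynomial (Fin N) ℂ} {i : Fin N} {m : Fin N →₀ ℕ}
    (hm : m ∈ (pderiv i P).support) : ∃ s ∈ P.support, wdeg k m + k i = wdeg k s := by
  have h1 : pderiv i P = ∑ s ∈ P.support, pderiv i (monomial s (coeff s P)) := by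
    conv_lhs => rw [P.as_sum]
    rw [map_sum]
  rw [h1] at hm
  obtain ⟨s, hs, hms⟩ := Finset.mem_biUnion.mp (MvPolynomial.support_sum hm)
  rw [pderiv_monomial, MvPolynomial.support_monomial] at hms
  by_cases hc : coeff s P * (s i : ℂ) = 0
  · simp [hc] at hms
  · rw [if_neg hc] at hms
    have hsi : 1 ≤ s i := by
      rcases Nat.eq_zero_or_pos (s i) with h | h
      · exfalso; apply hc; rw [h]; simp
      · exact h
    have hm' : m = s - Finsupp.single i 1 := by simpa using hms
    exact ⟨s, hs, by rw [hm']; exact wdeg_sub_single k s i hsi⟩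

lemma support_wdeg_eq (k : Fin N → ℕ) (d : ℕ) (W : MvPolynomial (Fin N) ℂ)
    (hhom : ∀ (lam : ℂ) (z : Fin N → ℂ),
      eval (fun i => lam ^ (k i) * z i) W = lam ^ d * eval z W) :
    ∀ m ∈ W.support, wdeg k m = d := by
  intro m hm
  have key : ∀ lam : ℂ,
      (∑ m' ∈ W.support, monomial m' (coeff m' W * lam ^ wdeg k m'))
        = MvPolynomial.C (lam ^ d) * W := by
    intro lam
    apply MvPolynomial.funext
    intro z
    rw [map_sum, map_mul, eval_C, ← hhom lam z, eval_eq']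
    refine Finset.sum_congr rfl fun m' _ => ?_
    rw [eval_monomial, Finsupp.prod_pow, prod_scale k lam z m']
    ring
  have h2 := congrArg (coeff m) (key 2)
  rw [coeff_sum] at h2
  have h3 : ∑ m' ∈ W.support, coeff m (monomial m' (coeff m' W * (2:ℂ) ^ wdeg k m'))
      = coeff m W * 2 ^ wdeg k m := by
    rw [Finset.sum_eq_single m]
    · rw [coeff_monomial, if_pos rfl]
    · intro b _ hbm; rw [coeff_monomial, if_neg hbm]
    · intro h; exact absurd hm h
  rw [h3, coeff_C_mul] at h2
  have hcm : coeff m W ≠ 0 := mem_support_iff.mp hm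
  have h4 : (2:ℂ) ^ wdeg k m = 2 ^ d :=
    mul_left_cancel₀ hcm (by rw [mul_comm ((2:ℂ) ^ d) (coeff m W)] at h2; exact h2)
  have h5 : ((2 ^ wdeg k m : ℕ) : ℂ) = ((2 ^ d : ℕ) : ℂ) := by push_cast; exact h4
  exact Nat.pow_right_injective (le_refl 2) (Nat.cast_injective h5)

lemma exists_scale (d : ℕ) (k : Fin N → ℕ) (hk : ∀ i, 1 ≤ k i) (hkd : ∀ i, k i ≤ d) (hd : 1 ≤ d)
    (z : EuclideanSpace ℂ (Fin N)) (hz : 1 ≤ ‖z‖) :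
    ∃ (lam : ℝ) (u : Fin N → ℂ), 1 ≤ lam ∧ (∑ i, ‖u i‖ ^ 2) = 1 ∧
      (∀ i, (z : Fin N → ℂ) i = (lam : ℂ) ^ k i * u i) ∧ ‖z‖ ^ 2 ≤ lam ^ (2 * d) := by
  have hz2 : ‖z‖ ^ 2 = ∑ i, ‖(z : Fin N → ℂ) i‖ ^ 2 := by
    rw [EuclideanSpace.norm_eq, Real.sq_sqrt (by positivity)]
  set φ : ℝ → ℝ :=
    fun ρ => (∑ i, ‖(z : Fin N → ℂ) i‖ ^ 2 * ρ ^ (2 * (d - k i))) - ρ ^ (2 * d) with hφ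
  have hcont : Continuous φ := by
    apply Continuous.sub
    · exact continuous_finset_sum _ fun i _ => (continuous_const.mul (continuous_pow _))
    · exact continuous_pow _
  set b : ℝ := ‖z‖ + 1 with hbdef
  have hb1 : 1 ≤ b := by have := hz; simp only [hbdef]; linarith
  have hb0 : 0 ≤ b := by linarith
  have hφ1 : 0 ≤ φ 1 := by
    simp only [hφ, one_pow, mul_one]
    rw [← hz2]
    nlinarith [hz]
  have hφb : φ b ≤ 0 := by
    simp only [hφ]
    have hstep : ∀ i : Fin N, ‖(z : Fin N → ℂ) i‖ ^ 2 * b ^ (2 * (d - k i))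
        ≤ ‖(z : Fin N → ℂ) i‖ ^ 2 * b ^ (2 * d - 2) := by
      intro i
      refine mul_le_mul_of_nonneg_left (pow_le_pow_right₀ hb1 ?_) (by positivity)
      have h1 := hk i; have h2 := hkd i; omega
    have hsum : (∑ i, ‖(z : Fin N → ℂ) i‖ ^ 2 * b ^ (2 * (d - k i)))
        ≤ ‖z‖ ^ 2 * b ^ (2 * d - 2) := by
      calc (∑ i, ‖(z : Fin N → ℂ) i‖ ^ 2 * b ^ (2 * (d - k i)))
          ≤ ∑ i, ‖(z : Fin N → ℂ) i‖ ^ 2 * b ^ (2 * d - 2) := Finset.sum_le_sum fun i _ => hstep i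
        _ = ‖z‖ ^ 2 * b ^ (2 * d - 2) := by rw [hz2, Finset.sum_mul]
    have hzb : ‖z‖ ^ 2 ≤ b ^ 2 := by nlinarith [norm_nonneg z]
    have hbpow : b ^ (2 * d - 2) * b ^ 2 = b ^ (2 * d) := by
      rw [← pow_add]; congr 1; omega
    nlinarith [pow_nonneg hb0 (2 * d - 2)]
  obtain ⟨lam, hmem, heq⟩ := intermediate_value_Icc' hb1 hcont.continuousOn ⟨hφb, hφ1⟩
  have hlam1 : 1 ≤ lam := hmem.1
  have hlam0 : (0:ℝ) < lam := by linarith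
  have hlamC : ((lam : ℂ)) ≠ 0 := by exact_mod_cast hlam0.ne'
  have hkey : ∑ i, ‖(z : Fin N → ℂ) i‖ ^ 2 * lam ^ (2 * (d - k i)) = lam ^ (2 * d) := by
    have h := heq
    simp only [hφ] at h; linarith
  refine ⟨lam, fun i => (z : Fin N → ℂ) i / (lam : ℂ) ^ k i, hlam1, ?_, ?_, ?_⟩
  · have hnorm : ∀ i, ‖(z : Fin N → ℂ) i / (lam : ℂ) ^ k i‖ ^ 2
        = ‖(z : Fin N → ℂ) i‖ ^ 2 / lam ^ (2 * k i) := by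
      intro i
      rw [norm_div, div_pow, norm_pow, Complex.norm_real, Real.norm_of_nonneg hlam0.le,
        ← pow_mul, mul_comm (k i) 2]
    have hsplit : ∀ i : Fin N, ‖(z : Fin N → ℂ) i‖ ^ 2 * lam ^ (2 * (d - k i))
        = (‖(z : Fin N → ℂ) i‖ ^ 2 / lam ^ (2 * k i)) * lam ^ (2 * d) := by
      intro i
      have hexp : 2 * (d - k i) + 2 * k i = 2 * d := by have := hkd i; omega
      rw [div_mul_eq_mul_div, eq_div_iff (by positivity : (0:ℝ) < lam ^ (2 * k i)).ne']
      rw [mul_assoc, ← pow_add, hexp]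
    have hpow : (0:ℝ) < lam ^ (2 * d) := by positivity
    have h := hkey
    rw [Finset.sum_congr rfl (fun i _ => hsplit i), ← Finset.sum_mul] at h
    have h1 : (∑ i, ‖(z : Fin N → ℂ) i‖ ^ 2 / lam ^ (2 * k i)) = 1 :=
      mul_right_cancel₀ hpow.ne' (by rw [h, one_mul])
    rw [Finset.sum_congr rfl (fun i _ => hnorm i), h1]
  · intro i
    rw [mul_comm, div_mul_cancel₀ _ (pow_ne_zero _ hlamC)]
  · rw [hz2, ← hkey]
    refine Finset.sum_le_sum fun i _ => ?_
    exact le_mul_of_one_le_right (by positivity) (one_le_pow₀ hlam1)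

end StrongTame

set_option maxHeartbeats 4000000 in
open StrongTame in
theorem strong_tameness_lower_deformation
    (N : ℕ) (hN : 1 ≤ N) (W : MvPolynomial (Fin N) ℂ)
    (q : Fin N → ℚ) (k : Fin N → ℕ) (d : ℕ)
    (hk : ∀ i, 0 < k i) (hd : 0 < d)
    (hq : ∀ i, q i = (k i : ℚ) / (d : ℚ))
    (hq0 : ∀ i, 0 < q i) (hq1 : ∀ i, q i < 1)
    (hhom : ∀ (lam : ℂ) (z : Fin N → ℂ),
      eval (fun i => lam ^ (k i) * z i) W = lam ^ d * eval z W)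
    (hnd : ∀ z : Fin N → ℂ, (∀ i, eval z (pderiv i W) = 0) → z = 0)
    (hhalf : ∀ i, q i ≤ 1 / 2)
    (m : ℕ) (a : Fin m → (Fin N →₀ ℕ))
    (hweight : ∀ j, (∑ i, q i * ((a j) i : ℚ)) < 1) :
    ∀ t : Fin m → ℂ, ∀ C : ℝ, 0 < C → ∀ K : ℝ, ∃ R : ℝ, 0 < R ∧
      ∀ z : EuclideanSpace ℂ (Fin N), R ≤ ‖z‖ →
        K ≤ (∑ i, ‖eval (z : Fin N → ℂ)
                (pderiv i (W + ∑ j, MvPolynomial.C (t j) * monomial (a j) 1))‖ ^ 2)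
            - C * ∑ i, ∑ j', ‖eval (z : Fin N → ℂ)
                (pderiv i (pderiv j' (W + ∑ j, MvPolynomial.C (t j) * monomial (a j) 1)))‖ := by
  intro t C hC K
  classical
  set V : MvPolynomial (Fin N) ℂ := ∑ j, MvPolynomial.C (t j) * monomial (a j) 1 with hVdef
  set F : MvPolynomial (Fin N) ℂ := W + V with hFdef
  clear_value V F
  have hdQ : (0:ℚ) < (d:ℚ) := by exact_mod_cast hd
  have hkd : ∀ i, k i < d := by
    intro i
    have h := hq1 i
    rw [hq i, div_lt_one hdQ] at h
    exact_mod_cast h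
  have h2k : ∀ i, 2 * k i ≤ d := by
    intro i
    have h := hhalf i
    rw [hq i, div_le_div_iff₀ hdQ (by norm_num)] at h
    have h2 : ((2 * k i : ℕ) : ℚ) ≤ (d:ℚ) := by push_cast; linarith
    exact_mod_cast h2
  have i0 : Fin N := ⟨0, hN⟩
  have hd2 : 2 ≤ d := le_trans (by have := hk i0; omega) (h2k i0)
  -- support facts
  have hWs : ∀ m' ∈ W.support, wdeg k m' = d := support_wdeg_eq k d W hhom
  have hVs : ∀ m' ∈ V.support, wdeg k m' + 1 ≤ d := by
    intro m' hm'
    have hcm : coeff m' V ≠ 0 := mem_support_iff.mp hm'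
    rw [hVdef, coeff_sum] at hcm
    obtain ⟨j, _, hne⟩ := Finset.exists_ne_zero_of_sum_ne_zero hcm
    have hma : m' = a j := by
      by_contra hne2
      exact hne (by rw [C_mul_monomial, coeff_monomial, if_neg (fun h => hne2 h.symm)])
    subst hma
    have hw := hweight j
    have he : (∑ i, q i * ((a j) i : ℚ)) = (wdeg k (a j) : ℚ) / (d:ℚ) := by
      rw [wdeg]; push_cast
      rw [Finset.sum_div]
      refine Finset.sum_congr rfl fun i _ => ?_
      rw [hq i]; ring
    rw [he, div_lt_one hdQ] at hw
    have : wdeg k (a j) < d := by exact_mod_cast hw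
    omega
  have hFs : ∀ m' ∈ F.support, wdeg k m' ≤ d := by
    intro m' hm'
    rw [hFdef] at hm'
    rcases Finset.mem_union.mp (MvPolynomial.support_add hm') with h | h
    · exact (hWs m' h).le
    · have := hVs m' h; omega
  -- derivative support facts
  have hWps : ∀ i, ∀ m' ∈ (pderiv i W).support, wdeg k m' = d - k i := by
    intro i m' hm'
    obtain ⟨s, hs, he⟩ := support_pderiv_wdeg k hm'
    have := hWs s hs; omega
  have hVps : ∀ i, ∀ m' ∈ (pderiv i V).support, wdeg k m' ≤ d - 1 - k i := by
    intro i m' hm'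
    obtain ⟨s, hs, he⟩ := support_pderiv_wdeg k hm'
    have := hVs s hs; omega
  have hFpps : ∀ i i', ∀ m' ∈ (pderiv i (pderiv i' F)).support, wdeg k m' ≤ d - 2 := by
    intro i i' m' hm'
    obtain ⟨s, hs, he⟩ := support_pderiv_wdeg k hm'
    obtain ⟨s', hs', he'⟩ := support_pderiv_wdeg k hs
    have h1 := hFs s' hs'
    have h2 := hk i; have h3 := hk i'
    omega
  -- minimum of |∇W|² on the unit sphere
  have hcont : Continuous fun u : EuclideanSpace ℂ (Fin N) =>
      ∑ i, ‖eval (u : Fin N → ℂ) (pderiv i W)‖ ^ 2 := by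
    refine continuous_finset_sum _ fun i _ => ?_
    have h1 : Continuous fun u : EuclideanSpace ℂ (Fin N) => eval (u : Fin N → ℂ) (pderiv i W) :=
      (MvPolynomial.continuous_eval _).comp (PiLp.continuous_ofLp 2 fun _ : Fin N => ℂ)
    exact h1.norm.pow 2
  have hsphne : (Metric.sphere (0 : EuclideanSpace ℂ (Fin N)) 1).Nonempty := by
    refine ⟨EuclideanSpace.single i0 1, ?_⟩
    rw [mem_sphere_zero_iff_norm, EuclideanSpace.norm_single]
    simp
  obtain ⟨u₀, hu₀s, hu₀min⟩ :=
    (isCompact_sphere (0 : EuclideanSpace ℂ (Fin N)) 1).exists_isMinOn hsphne hcont.continuousOn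
  set c₀ : ℝ := ∑ i, ‖eval (u₀ : Fin N → ℂ) (pderiv i W)‖ ^ 2 with hc₀def
  clear_value c₀
  have hc₀nonneg : (0:ℝ) ≤ c₀ := by
    rw [hc₀def]; exact Finset.sum_nonneg fun _ _ => by positivity
  have hc₀pos : 0 < c₀ := by
    rcases lt_or_eq_of_le hc₀nonneg with h | h
    · exact h
    · exfalso
      rw [hc₀def] at h
      have hall : ∀ i, eval (u₀ : Fin N → ℂ) (pderiv i W) = 0 := by
        intro i
        have hterm : ‖eval (u₀ : Fin N → ℂ) (pderiv i W)‖ ^ 2 = 0 :=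
          (Finset.sum_eq_zero_iff_of_nonneg (fun j _ => by positivity)).mp h.symm i (Finset.mem_univ i)
        exact norm_eq_zero.mp (pow_eq_zero_iff (two_ne_zero) |>.mp hterm)
      have hzero : (u₀ : Fin N → ℂ) = 0 := hnd _ hall
      have hu₀n : ‖u₀‖ = 1 := mem_sphere_zero_iff_norm.mp hu₀s
      have : u₀ = 0 := WithLp.ofLp_injective 2 hzero
      rw [this, norm_zero] at hu₀n
      norm_num at hu₀n
  -- the constants
  set M : ℝ := ∑ i, ∑ m' ∈ (pderiv i V).support, ‖coeff m' (pderiv i V)‖ with hMdef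
  clear_value M
  have hM0 : 0 ≤ M := by
    rw [hMdef]
    exact Finset.sum_nonneg fun _ _ => Finset.sum_nonneg fun _ _ => norm_nonneg _
  have hMi : ∀ i, (∑ m' ∈ (pderiv i V).support, ‖coeff m' (pderiv i V)‖) ≤ M := by
    intro i
    rw [hMdef]
    exact Finset.single_le_sum
      (f := fun i => ∑ m' ∈ (pderiv i V).support, ‖coeff m' (pderiv i V)‖)
      (fun j _ => Finset.sum_nonneg fun _ _ => norm_nonneg _) (Finset.mem_univ i)
  set C₂ : ℝ :=
    ∑ i, ∑ i', ∑ m' ∈ (pderiv i (pderiv i' F)).support, ‖coeff m' (pderiv i (pderiv i' F))‖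
    with hC₂def
  clear_value C₂
  have hC₂0 : 0 ≤ C₂ := by
    rw [hC₂def]
    exact Finset.sum_nonneg fun _ _ => Finset.sum_nonneg fun _ _ =>
      Finset.sum_nonneg fun _ _ => norm_nonneg _
  have hNpos : (0:ℝ) < (N:ℝ) := by exact_mod_cast (by omega : 0 < N)
  set s : ℝ := Real.sqrt (c₀ / N) with hsdef
  clear_value s
  have hs0 : 0 < s := by rw [hsdef]; exact Real.sqrt_pos.mpr (div_pos hc₀pos hNpos)
  have hs2 : s ^ 2 = c₀ / N := by
    rw [hsdef]; exact Real.sq_sqrt (div_nonneg hc₀pos.le hNpos.le)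
  set lam₀ : ℝ := 1 + 2 * M / s + 8 * N * C * C₂ / c₀ + 8 * N * |K| / c₀ with hlam₀def
  clear_value lam₀
  have hc0ne : c₀ ≠ 0 := hc₀pos.ne'
  have hNne : (N:ℝ) ≠ 0 := hNpos.ne'
  have hn1 : (0:ℝ) ≤ 2 * M / s := div_nonneg (by linarith) hs0.le
  have hn2 : (0:ℝ) ≤ 8 * N * C * C₂ / c₀ := div_nonneg
    (mul_nonneg (mul_nonneg (mul_nonneg (by norm_num) hNpos.le) hC.le) hC₂0) hc₀pos.le
  have hn3 : (0:ℝ) ≤ 8 * N * |K| / c₀ := div_nonneg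
    (mul_nonneg (mul_nonneg (by norm_num) hNpos.le) (abs_nonneg K)) hc₀pos.le
  have hlam₀1 : 1 ≤ lam₀ := by rw [hlam₀def]; linarith
  have hlam₀0 : 0 < lam₀ := by linarith
  refine ⟨lam₀ ^ d, pow_pos hlam₀0 d, ?_⟩
  intro z hz
  have hR1 : 1 ≤ lam₀ ^ d := one_le_pow₀ hlam₀1
  have hz1 : 1 ≤ ‖z‖ := le_trans hR1 hz
  obtain ⟨lam, u, hlam1, husum, hzu, hzlam⟩ :=
    exists_scale d k (fun i => hk i) (fun i => (hkd i).le) (by omega) z hz1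
  have hlam0 : (0:ℝ) < lam := by linarith
  have hlamlam₀ : lam₀ ≤ lam := by
    have h2 : lam₀ ^ (2 * d) ≤ lam ^ (2 * d) := by
      have h1 : lam₀ ^ (2 * d) = (lam₀ ^ d) ^ 2 := by rw [← pow_mul, mul_comm]
      rw [h1]
      calc (lam₀ ^ d) ^ 2 ≤ ‖z‖ ^ 2 := by nlinarith [norm_nonneg z]
        _ ≤ lam ^ (2 * d) := hzlam
    exact le_of_pow_le_pow_left₀ (by omega) hlam0.le h2
  have hzfun : (z : Fin N → ℂ) = fun i => ((lam:ℝ):ℂ) ^ k i * u i := funext hzu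
  have hu1 : ∀ i, ‖u i‖ ≤ 1 := by
    intro i
    have h1 : ‖u i‖ ^ 2 ≤ 1 := by
      rw [← husum]
      exact Finset.single_le_sum (f := fun i => ‖u i‖ ^ 2)
        (fun j _ => by positivity) (Finset.mem_univ i)
    nlinarith [norm_nonneg (u i)]
  have huE : (WithLp.toLp 2 u) ∈
      Metric.sphere (0 : EuclideanSpace ℂ (Fin N)) 1 := by
    rw [mem_sphere_zero_iff_norm, EuclideanSpace.norm_eq]
    have : (∑ i, ‖(WithLp.toLp 2 u) i‖ ^ 2) = 1 := husum
    rw [this, Real.sqrt_one]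
  have hmin : c₀ ≤ ∑ i, ‖eval u (pderiv i W)‖ ^ 2 := by
    rw [hc₀def]
    exact isMinOn_iff.mp hu₀min _ huE
  have hex : ∃ i, c₀ / N ≤ ‖eval u (pderiv i W)‖ ^ 2 := by
    by_contra hno
    push_neg at hno
    have hlt : (∑ i, ‖eval u (pderiv i W)‖ ^ 2) < ∑ _i : Fin N, c₀ / N :=
      Finset.sum_lt_sum_of_nonempty ⟨i0, Finset.mem_univ i0⟩ (fun i _ => hno i)
    rw [Finset.sum_const, Finset.card_univ, Fintype.card_fin, nsmul_eq_mul,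
      mul_div_cancel₀ _ hNpos.ne'] at hlt
    linarith
  obtain ⟨i₁, hi₁⟩ := hex
  set b : ℝ := ‖eval u (pderiv i₁ W)‖ with hbdef
  clear_value b
  have hb0 : 0 ≤ b := by rw [hbdef]; exact norm_nonneg _
  have hsb : s ≤ b := by nlinarith [hi₁, hs2, hs0, hb0]
  -- evaluation identities and bounds
  have hevalW : ‖eval (z : Fin N → ℂ) (pderiv i₁ W)‖ = lam ^ (d - k i₁) * b := by
    rw [hzfun, eval_scale_of_deg k (hWps i₁) ((lam:ℂ)) u, norm_mul, norm_pow,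
      Complex.norm_real, Real.norm_of_nonneg hlam0.le, hbdef]
  have hevalV : ‖eval (z : Fin N → ℂ) (pderiv i₁ V)‖ ≤ M * lam ^ (d - 1 - k i₁) := by
    rw [hzfun]
    refine le_trans (eval_scale_bound k (hVps i₁) hlam1 hu1) ?_
    exact mul_le_mul_of_nonneg_right (hMi i₁) (by positivity)
  have heval2 : ∀ i i', ‖eval (z : Fin N → ℂ) (pderiv i (pderiv i' F))‖
      ≤ (∑ m' ∈ (pderiv i (pderiv i' F)).support, ‖coeff m' (pderiv i (pderiv i' F))‖)
        * lam ^ (d - 2) := by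
    intro i i'
    rw [hzfun]
    exact eval_scale_bound k (hFpps i i') hlam1 hu1
  -- lower bound for gradient component i₁ of F
  have hexp1 : d - k i₁ = (d - 1 - k i₁) + 1 := by
    have := h2k i₁; have := hk i₁; omega
  have hgrad : lam ^ (d - 1 - k i₁) * (lam * b - M) ≤ ‖eval (z : Fin N → ℂ) (pderiv i₁ F)‖ := by
    have hFW : pderiv i₁ F = pderiv i₁ W + pderiv i₁ V := by rw [hFdef, map_add]
    rw [hFW, map_add]
    set x := eval (z : Fin N → ℂ) (pderiv i₁ W)
    set y := eval (z : Fin N → ℂ) (pderiv i₁ V)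
    have h1 : ‖x‖ - ‖y‖ ≤ ‖x + y‖ := by
      have h := norm_add_le (x + y) (-y)
      simp only [add_neg_cancel_right, norm_neg] at h
      linarith
    have h2 : lam ^ (d - 1 - k i₁) * (lam * b - M) ≤ ‖x‖ - ‖y‖ := by
      have hx : ‖x‖ = lam ^ (d - 1 - k i₁) * lam * b := by
        rw [hevalW, hexp1, pow_succ]
      have hy : ‖y‖ ≤ M * lam ^ (d - 1 - k i₁) := hevalV
      rw [hx]
      have hpw : (0:ℝ) ≤ lam ^ (d - 1 - k i₁) := by positivity
      nlinarith
    linarith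
  have hlamsM : 2 * M ≤ lam * s := by
    have h1 : 2 * M / s ≤ lam₀ := by rw [hlam₀def]; linarith
    calc 2 * M = (2 * M / s) * s := by field_simp
      _ ≤ lam₀ * s := mul_le_mul_of_nonneg_right h1 hs0.le
      _ ≤ lam * s := mul_le_mul_of_nonneg_right hlamlam₀ hs0.le
  have hlb : lam * b / 2 ≤ lam * b - M := by
    have h2 : lam * s ≤ lam * b := mul_le_mul_of_nonneg_left hsb hlam0.le
    linarith
  have hgrad2 : lam ^ (d - k i₁) * (b / 2) ≤ ‖eval (z : Fin N → ℂ) (pderiv i₁ F)‖ := by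
    have hpw : (0:ℝ) ≤ lam ^ (d - 1 - k i₁) := by positivity
    calc lam ^ (d - k i₁) * (b / 2) = lam ^ (d - 1 - k i₁) * (lam * b / 2) := by
          rw [hexp1, pow_succ]; ring
      _ ≤ lam ^ (d - 1 - k i₁) * (lam * b - M) := mul_le_mul_of_nonneg_left hlb hpw
      _ ≤ _ := hgrad
  have hgradsq : lam ^ d * (c₀ / (4 * N)) ≤ ‖eval (z : Fin N → ℂ) (pderiv i₁ F)‖ ^ 2 := by
    have h0 : (0:ℝ) ≤ lam ^ (d - k i₁) * (b / 2) := by positivity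
    have h1 : (lam ^ (d - k i₁) * (b / 2)) ^ 2 ≤ ‖eval (z : Fin N → ℂ) (pderiv i₁ F)‖ ^ 2 :=
      pow_le_pow_left₀ h0 hgrad2 2
    have h3 : lam ^ d ≤ lam ^ (2 * (d - k i₁)) :=
      pow_le_pow_right₀ hlam1 (by have := h2k i₁; omega)
    have h4 : (lam ^ (d - k i₁)) ^ 2 = lam ^ (2 * (d - k i₁)) := by
      rw [← pow_mul, mul_comm]
    calc lam ^ d * (c₀ / (4 * N)) = lam ^ d * ((c₀ / N) / 4) := by ring
      _ ≤ lam ^ d * (b ^ 2 / 4) := by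
          refine mul_le_mul_of_nonneg_left ?_ (pow_nonneg hlam0.le d)
          linarith [hi₁]
      _ ≤ lam ^ (2 * (d - k i₁)) * (b ^ 2 / 4) :=
          mul_le_mul_of_nonneg_right h3 (by nlinarith [hb0])
      _ = (lam ^ (d - k i₁) * (b / 2)) ^ 2 := by rw [mul_pow, h4]; ring
      _ ≤ _ := h1
  have hgradsum : lam ^ d * (c₀ / (4 * N))
      ≤ ∑ i, ‖eval (z : Fin N → ℂ) (pderiv i F)‖ ^ 2 :=
    le_trans hgradsq (Finset.single_le_sum
      (f := fun i => ‖eval (z : Fin N → ℂ) (pderiv i F)‖ ^ 2)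
      (fun i _ => by positivity) (Finset.mem_univ i₁))
  have hhess : (∑ i, ∑ i', ‖eval (z : Fin N → ℂ) (pderiv i (pderiv i' F))‖)
      ≤ C₂ * lam ^ (d - 2) := by
    rw [hC₂def, Finset.sum_mul]
    refine Finset.sum_le_sum fun i _ => ?_
    rw [Finset.sum_mul]
    exact Finset.sum_le_sum fun i' _ => heval2 i i'
  have hCbound : C * (C₂ * lam ^ (d - 2)) ≤ (c₀ / (8 * N)) * lam ^ d := by
    have h1 : 8 * N * C * C₂ / c₀ ≤ lam := le_trans (by rw [hlam₀def]; linarith) hlamlam₀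
    have h2 : lam ^ d = lam ^ (d - 2) * lam ^ 2 := by rw [← pow_add]; congr 1; omega
    have h3 : lam ≤ lam ^ 2 := by nlinarith
    have h4 : C * C₂ ≤ (c₀ / (8 * N)) * lam ^ 2 := by
      have he : (c₀ / (8 * N)) * (8 * N * C * C₂ / c₀) = C * C₂ := by
        field_simp
      have h5 : (c₀ / (8 * N)) * (8 * N * C * C₂ / c₀) ≤ (c₀ / (8 * N)) * lam ^ 2 := by
        refine mul_le_mul_of_nonneg_left (le_trans h1 h3)
          (div_nonneg hc₀pos.le (by linarith))
      linarith [he ▸ h5]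
    calc C * (C₂ * lam ^ (d - 2)) = (C * C₂) * lam ^ (d - 2) := by ring
      _ ≤ ((c₀ / (8 * N)) * lam ^ 2) * lam ^ (d - 2) :=
          mul_le_mul_of_nonneg_right h4 (pow_nonneg hlam0.le _)
      _ = (c₀ / (8 * N)) * lam ^ d := by rw [h2]; ring
  have hK : |K| ≤ (c₀ / (8 * N)) * lam ^ d := by
    have h1 : 8 * N * |K| / c₀ ≤ lam := le_trans (by rw [hlam₀def]; linarith) hlamlam₀
    have h2 : lam ≤ lam ^ d := le_self_pow₀ hlam1 (by omega)
    have he : (c₀ / (8 * N)) * (8 * N * |K| / c₀) = |K| := by field_simp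
    have h5 : (c₀ / (8 * N)) * (8 * N * |K| / c₀) ≤ (c₀ / (8 * N)) * lam ^ d :=
      mul_le_mul_of_nonneg_left (le_trans h1 h2) (div_nonneg hc₀pos.le (by linarith))
    linarith [he ▸ h5]
  have hfin : C * (∑ i, ∑ i', ‖eval (z : Fin N → ℂ) (pderiv i (pderiv i' F))‖)
      ≤ C * (C₂ * lam ^ (d - 2)) := mul_le_mul_of_nonneg_left hhess hC.le
  have hsplit : (c₀ / (4 * N)) * lam ^ d - (c₀ / (8 * N)) * lam ^ d
      = (c₀ / (8 * N)) * lam ^ d := by ring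
  calc K ≤ |K| := le_abs_self K
    _ ≤ (∑ i, ‖eval (z : Fin N → ℂ) (pderiv i F)‖ ^ 2)
        - C * ∑ i, ∑ i', ‖eval (z : Fin N → ℂ) (pderiv i (pderiv i' F))‖ := by
      have hA := hgradsum
      nlinarith [hK, hfin, hCbound]
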